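/- Let G_n be the undirected path graph on vertices v_0, v_1, ..., v_n with edges e_i = {v_{i-1}, v_i}. If π is a partition of the vertex set {v_0, ..., v_n} such that the quotient multigraph G_n^π (obtained by identifying vertices according to the blocks of π) is a double tree (i.e., its underlying simple graph is a tree and every edge of the quotient has multiplicity exactly two), then v_0 and v_n lie in the same block of π. -/

import Mathlib

/-- The underlying simple graph of the quotient of the path graph on vertices
`v_0, …, v_n` (edges `e_i = {v_{i-1}, v_i}`, indexed by `i : Fin n`) under the
quotient map `c` identifying vertices according to the blocks of a partition:
`v` and `w` are adjacent iff they are distinct and some edge of the path has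
image `{v, w}`. -/
def pathQuotientGraph {n : ℕ} {B : Type*} (c : Fin (n + 1) → B) : SimpleGraph B where
  Adj v w := v ≠ w ∧ ∃ i : Fin n, s(c i.castSucc, c i.succ) = s(v, w)
  symm := ⟨fun v w ⟨hne, i, hi⟩ => ⟨hne.symm, i, hi.trans (Sym2.eq_swap)⟩⟩
  loopless := ⟨fun v h => h.1 rfl⟩

/-- If the quotient multigraph of the path graph `G_n` by a partition (encoded by a
surjective quotient map `c` onto the set of blocks `B`) is a double tree — no loops,
underlying simple graph a tree, and every edge of multiplicity exactly two — then
`v_0` and `v_n` lie in the same block. -/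
theorem path_quotient_double_tree_endpoints {n : ℕ} {B : Type*} [Fintype B]
    (c : Fin (n + 1) → B) (hsurj : Function.Surjective c)
    (hloopless : ∀ i : Fin n, c i.castSucc ≠ c i.succ)
    (htree : (pathQuotientGraph c).IsTree)
    (hmult : ∀ i : Fin n,
      Nat.card {i' : Fin n // s(c i'.castSucc, c i'.succ) = s(c i.castSucc, c i.succ)} = 2) :
    c 0 = c (Fin.last n) := by
  classical
  by_contra hne
  set b := c 0 with hb
  have hlast : c (Fin.last n) ≠ b := fun h => hne h.symm
  set edge : Fin n → Sym2 B := fun i => s(c i.castSucc, c i.succ) with hedge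
  set F : Finset (Fin n) :=
    Finset.univ.filter (fun i => c i.castSucc = b ∨ c i.succ = b) with hF
  have hmem : ∀ i, i ∈ F ↔ b ∈ edge i := by
    intro i
    simp [hF, hedge, Sym2.mem_iff, eq_comm]
  -- F.card is even
  have heven : Even F.card := by
    have h1 : F.card = ∑ e ∈ F.image edge, (F.filter (fun i => edge i = e)).card :=
      Finset.card_eq_sum_card_image edge F
    have h2 : ∀ e ∈ F.image edge, (F.filter (fun i => edge i = e)).card = 2 := by
      intro e he
      obtain ⟨i₀, hi₀F, hi₀⟩ := Finset.mem_image.mp he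
      have hbe : b ∈ e := hi₀ ▸ (hmem i₀).mp hi₀F
      have hfe : F.filter (fun i => edge i = e)
          = Finset.univ.filter (fun i => edge i = e) := by
        ext i
        simp only [Finset.mem_filter, Finset.mem_univ, true_and]
        exact ⟨fun h => h.2, fun h => ⟨(hmem i).mpr (h ▸ hbe), h⟩⟩
      rw [hfe, ← hi₀]
      have hm := hmult i₀
      rwa [Nat.card_eq_fintype_card, Fintype.card_subtype] at hm
    rw [h1, Finset.sum_congr rfl h2, Finset.sum_const, smul_eq_mul]
    exact even_two.mul_left _
  -- F.card is odd
  set A : Finset (Fin n) := Finset.univ.filter (fun i => c i.castSucc = b) with hA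
  set Bs : Finset (Fin n) := Finset.univ.filter (fun i => c i.succ = b) with hBs
  set S : Finset (Fin (n + 1)) := Finset.univ.filter (fun j => c j = b) with hS
  have hFAB : F = A ∪ Bs := by rw [hF, hA, hBs, Finset.filter_or]
  have hdisj : Disjoint A Bs := by
    rw [Finset.disjoint_left]
    intro i hiA hiBs
    rw [hA, Finset.mem_filter] at hiA
    rw [hBs, Finset.mem_filter] at hiBs
    exact hloopless i (hiA.2.trans hiBs.2.symm)
  have hAcard : A.card = S.card := by
    have himg : A.image Fin.castSucc = S := by
      ext j
      simp only [Finset.mem_image, hA, hS, Finset.mem_filter, Finset.mem_univ, true_and]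
      constructor
      · rintro ⟨i, hi, rfl⟩; exact hi
      · intro hj
        have hjne : j ≠ Fin.last n := fun h => hlast (h ▸ hj)
        obtain ⟨i, rfl⟩ := Fin.exists_castSucc_eq.mpr hjne
        exact ⟨i, hj, rfl⟩
    rw [← himg, Finset.card_image_of_injective _ (Fin.castSucc_injective n)]
  have hBcard : Bs.card = (S.erase 0).card := by
    have himg : Bs.image Fin.succ = S.erase 0 := by
      ext j
      simp only [Finset.mem_image, hBs, hS, Finset.mem_erase, Finset.mem_filter,
        Finset.mem_univ, true_and]
      constructor
      · rintro ⟨i, hi, rfl⟩; exact ⟨Fin.succ_ne_zero i, hi⟩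
      · rintro ⟨hj0, hj⟩
        obtain ⟨i, rfl⟩ := Fin.exists_succ_eq.mpr hj0
        exact ⟨i, hj, rfl⟩
    rw [← himg, Finset.card_image_of_injective _ (Fin.succ_injective n)]
  have h0S : (0 : Fin (n + 1)) ∈ S := by
    rw [hS, Finset.mem_filter]; exact ⟨Finset.mem_univ _, rfl⟩
  have hpos : 0 < S.card := Finset.card_pos.mpr ⟨0, h0S⟩
  have hScard : S.card = (S.erase 0).card + 1 := by
    rw [Finset.card_erase_of_mem h0S]
    omega
  have hodd : F.card = 2 * (S.erase 0).card + 1 := by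
    rw [hFAB, Finset.card_union_of_disjoint hdisj, hAcard, hBcard, hScard]
    ring
  rw [hodd] at heven
  obtain ⟨k, hk⟩ := heven
  omega
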